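/- arXiv:2002.06166 — 5 statements merged into one kernel-verified Lean document; each statement's English description precedes it below -/
import Mathlib

section
/- For a real number s with 1 ≤ s ≤ 2 and an integer d ≥ 1, the volume of the region {(x_1,…,x_d) ∈ [0,1]^d : x_1 + ⋯ + x_d ≤ s} equals s^d/d! − (s−1)^d/((d−1)!). -/
open MeasureTheory

noncomputable def gfun (n : ℕ) (s : ℝ) : ℝ :=
  max s 0 ^ n / n.factorial - n * max (s - 1) 0 ^ n / n.factorial

def Aset (n : ℕ) (s : ℝ) : Set (Fin n → ℝ) :=
  {x | (∀ i, x i ∈ Set.Icc (0 : ℝ) 1) ∧ ∑ i, x i ≤ s}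

lemma hasDerivAt_maxpow (n : ℕ) (hn : 1 ≤ n) (u : ℝ) :
    HasDerivAt (fun x : ℝ => max x 0 ^ (n + 1) / (n + 1)) (max u 0 ^ n) u := by
  rcases lt_trichotomy u 0 with h | h | h
  · have hev : (fun x : ℝ => max x 0 ^ (n + 1) / (n + 1)) =ᶠ[nhds u] fun _ => (0 : ℝ) := by
      filter_upwards [Iio_mem_nhds h] with x hx
      simp [max_eq_right (le_of_lt (Set.mem_Iio.mp hx))]
    rw [max_eq_right h.le, zero_pow (by omega)]
    exact (hasDerivAt_const u (0 : ℝ)).congr_of_eventuallyEq hev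
  · subst h
    rw [max_self, zero_pow (by omega)]
    rw [hasDerivAt_iff_isLittleO]
    rw [Asymptotics.isLittleO_iff]
    intro c hc
    filter_upwards [Metric.ball_mem_nhds (0:ℝ) (lt_min hc one_pos)] with x hx
    have hx' : |x| < min c 1 := by simpa [Real.dist_eq] using hx
    have h1 : |x| ≤ 1 := le_of_lt (lt_of_lt_of_le hx' (min_le_right _ _))
    have hc' : |x| ≤ c := le_of_lt (lt_of_lt_of_le hx' (min_le_left _ _))
    simp only [max_self, zero_pow (by omega : n + 1 ≠ 0), zero_div, sub_zero, smul_zero,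
      sub_zero]
    have hm : |max x 0 ^ (n+1) / (n+1)| ≤ |x| ^ (n + 1) := by
      rw [abs_div, abs_pow]
      have h2 : |max x 0| ≤ |x| := by
        rcases le_total x 0 with hx0 | hx0
        · simp [max_eq_right hx0]
        · simp [max_eq_left hx0]
      calc |max x 0| ^ (n+1) / |((n:ℝ)+1)| ≤ |max x 0| ^ (n+1) := by
            apply div_le_self (by positivity)
            rw [abs_of_nonneg (by positivity : (0:ℝ) ≤ (n:ℝ)+1)]
            linarith [Nat.cast_nonneg (α := ℝ) n]
        _ ≤ |x| ^ (n+1) := pow_le_pow_left₀ (abs_nonneg _) h2 _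
    calc ‖max x 0 ^ (n+1) / ((n:ℝ)+1)‖ ≤ |x| ^ (n+1) := hm
      _ = |x| ^ n * |x| := by ring
      _ ≤ c * |x| := by
          apply mul_le_mul ?_ le_rfl (abs_nonneg _) (le_of_lt hc)
          calc |x| ^ n ≤ |x| ^ 1 := pow_le_pow_of_le_one (abs_nonneg _) h1 hn
            _ = |x| := pow_one _
            _ ≤ c := hc'
  · have hev : (fun x : ℝ => max x 0 ^ (n + 1) / (n + 1)) =ᶠ[nhds u] fun x => x ^ (n + 1) / (n + 1) := by
      filter_upwards [Ioi_mem_nhds h] with x hx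
      simp [max_eq_left (le_of_lt (Set.mem_Ioi.mp hx))]
    rw [max_eq_left h.le]
    have := (hasDerivAt_pow (n + 1) u).div_const ((n : ℝ) + 1)
    simp only [Nat.cast_add, Nat.cast_one, Nat.add_sub_cancel] at this
    have h2 : ((n:ℝ)+1) * u ^ n / ((n:ℝ)+1) = u ^ n := by
      field_simp
    rw [h2] at this
    exact this.congr_of_eventuallyEq hev

lemma cont_maxpow (n : ℕ) : Continuous (fun x : ℝ => max x 0 ^ n) :=
  (continuous_id.max continuous_const).pow n

lemma integral_maxpow (n : ℕ) (hn : 1 ≤ n) (c : ℝ) :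
    ∫ t in (0:ℝ)..1, max (c - t) 0 ^ n
      = (max c 0 ^ (n + 1) - max (c - 1) 0 ^ (n + 1)) / (n + 1) := by
  rw [intervalIntegral.integral_comp_sub_left (fun u => max u 0 ^ n) c]
  rw [intervalIntegral.integral_eq_sub_of_hasDerivAt
      (f := fun x : ℝ => max x 0 ^ (n + 1) / (n + 1))
      (fun x _ => hasDerivAt_maxpow n hn x)
      ((cont_maxpow n).intervalIntegrable _ _)]
  rw [sub_div, sub_zero]

lemma slicing (n : ℕ) (s : ℝ) :
    volume (Aset (n + 1) s)
      = ∫⁻ t in Set.Icc (0:ℝ) 1, volume (Aset n (s - t)) := by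
  set B : Set (ℝ × (Fin n → ℝ)) :=
    {p | (p.1 ∈ Set.Icc (0:ℝ) 1 ∧ ∀ i, p.2 i ∈ Set.Icc (0:ℝ) 1) ∧ p.1 + ∑ i, p.2 i ≤ s}
    with hBdef
  have hBclosed : IsClosed B := by
    apply IsClosed.inter
    · apply IsClosed.inter
      · exact isClosed_Icc.preimage continuous_fst
      · show IsClosed {p : ℝ × (Fin n → ℝ) | ∀ i, p.2 i ∈ Set.Icc (0:ℝ) 1}
        rw [Set.setOf_forall]
        exact isClosed_iInter fun i =>
          isClosed_Icc.preimage ((continuous_apply i).comp continuous_snd)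
    · exact isClosed_le (continuous_fst.add
        (continuous_finset_sum _ fun i _ => (continuous_apply i).comp continuous_snd))
        continuous_const
  have hB : MeasurableSet B := hBclosed.measurableSet
  have hpre : Aset (n+1) s
      = (MeasurableEquiv.piFinSuccAbove (fun _ : Fin (n+1) => ℝ) 0) ⁻¹' B := by
    ext x
    simp only [Aset, B, Set.mem_setOf_eq, Set.mem_preimage,
      MeasurableEquiv.piFinSuccAbove_apply, Fin.insertNthEquiv,
      Fin.forall_fin_succ, Fin.sum_univ_succ, Fin.zero_succAbove]
    tauto
  rw [hpre,
    (volume_preserving_piFinSuccAbove (fun _ : Fin (n+1) => ℝ) 0).measure_preimage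
      hB.nullMeasurableSet]
  rw [Measure.volume_eq_prod, Measure.prod_apply hB]
  have hslice : ∀ t : ℝ, volume (Prod.mk t ⁻¹' B)
      = Set.indicator (Set.Icc (0:ℝ) 1) (fun t => volume (Aset n (s - t))) t := by
    intro t
    by_cases ht : t ∈ Set.Icc (0:ℝ) 1
    · rw [Set.indicator_of_mem ht]
      congr 1
      ext y
      simp only [Set.mem_preimage, hBdef, Set.mem_setOf_eq, Aset, ht, true_and]
      constructor
      · rintro ⟨h1, h2⟩; exact ⟨h1, by linarith⟩
      · rintro ⟨h1, h2⟩; exact ⟨h1, by linarith⟩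
    · rw [Set.indicator_of_notMem ht]
      convert measure_empty
      · ext y
        simp only [Set.mem_preimage, hBdef, Set.mem_setOf_eq, Set.mem_empty_iff_false,
          iff_false]
        rintro ⟨⟨h1, _⟩, _⟩
        exact ht h1
      · infer_instance
  simp_rw [hslice]
  rw [lintegral_indicator measurableSet_Icc]

lemma gfun_nonneg (n : ℕ) (hn : 1 ≤ n) (s : ℝ) (hs : s ≤ 2) : 0 ≤ gfun n s := by
  unfold gfun
  rw [sub_nonneg, div_le_div_iff_of_pos_right (by positivity : (0:ℝ) < n.factorial)]
  rcases le_total s 1 with h | h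
  · rw [max_eq_right (by linarith : s - 1 ≤ 0), zero_pow (by omega), mul_zero]
    positivity
  · have ha0 : (0:ℝ) ≤ s - 1 := by linarith
    have ha1 : s - 1 ≤ 1 := by linarith
    rw [max_eq_left ha0, max_eq_left (by linarith : s ≥ 0)]
    have h1 : (n : ℝ) * (s - 1) ^ n ≤ n * (s - 1) := by
      apply mul_le_mul_of_nonneg_left _ (Nat.cast_nonneg n)
      calc (s - 1) ^ n ≤ (s - 1) ^ 1 := pow_le_pow_of_le_one ha0 ha1 hn
        _ = s - 1 := pow_one _
    have h2 : 1 + (n : ℝ) * (s - 1) ≤ (1 + (s - 1)) ^ n :=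
      one_add_mul_le_pow (by linarith : (-2:ℝ) ≤ s - 1) n
    have hss : (1 : ℝ) + (s - 1) = s := by ring
    rw [hss] at h2
    linarith

lemma base_case (s : ℝ) : volume (Aset 1 s) = ENNReal.ofReal (gfun 1 s) := by
  have hpre : Aset 1 s
      = (MeasurableEquiv.funUnique (Fin 1) ℝ) ⁻¹' (Set.Icc 0 1 ∩ Set.Iic s) := by
    ext x
    simp [Aset, MeasurableEquiv.funUnique, Fin.sum_univ_one, Fin.forall_fin_one,
      Set.mem_Icc, Set.mem_Iic]
  erw [hpre, (volume_preserving_funUnique (Fin 1) ℝ).measure_preimage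
      (s := Set.Icc (0:ℝ) 1 ∩ Set.Iic s) ((measurableSet_Icc.inter measurableSet_Iic).nullMeasurableSet)]
  have hint : Set.Icc (0:ℝ) 1 ∩ Set.Iic s = Set.Icc 0 (min 1 s) := by
    ext y
    simp only [Set.mem_inter_iff, Set.mem_Icc, Set.mem_Iic, le_min_iff]
    tauto
  rw [hint, Real.volume_Icc]
  have : gfun 1 s = max s 0 - max (s - 1) 0 := by
    simp [gfun]
  rw [this]
  rw [sub_zero]
  rcases le_total s 0 with h | h
  · rw [ENNReal.ofReal_eq_zero.2 ((min_le_right _ _).trans h),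
      ENNReal.ofReal_eq_zero.2
        (by rw [max_eq_right h, max_eq_right (by linarith : s - 1 ≤ 0)]; simp)]
  · rcases le_total s 1 with h1 | h1
    · rw [min_eq_right h1, max_eq_left h, max_eq_right (by linarith : s - 1 ≤ 0), sub_zero]
    · rw [min_eq_left h1, max_eq_left h, max_eq_left (by linarith : (0:ℝ) ≤ s - 1)]
      norm_num

lemma main_lemma (n : ℕ) (hn : 1 ≤ n) : ∀ s : ℝ, s ≤ 2 →
    volume (Aset n s) = ENNReal.ofReal (gfun n s) := by
  induction n with
  | zero => omega
  | succ n ih =>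
    rcases Nat.eq_or_lt_of_le hn with h1 | h1
    · intro s _
      rw [← h1]
      exact base_case s
    · have hn' : 1 ≤ n := by omega
      intro s hs
      rw [slicing]
      have step1 : ∫⁻ t in Set.Icc (0:ℝ) 1, volume (Aset n (s - t))
          = ∫⁻ t in Set.Icc (0:ℝ) 1, ENNReal.ofReal (gfun n (s - t)) := by
        apply setLIntegral_congr_fun measurableSet_Icc
        intro t ht
        exact ih hn' (s - t) (by linarith [ht.1])
      rw [step1]
      have hcont : Continuous (fun t : ℝ => gfun n (s - t)) := by
        unfold gfun
        exact (((cont_maxpow n).comp (continuous_const.sub continuous_id)).div_const _).sub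
          ((continuous_const.mul ((cont_maxpow n).comp ((continuous_const.sub
            continuous_id).sub continuous_const))).div_const _)
      have hnn : 0 ≤ᵐ[volume.restrict (Set.Icc (0:ℝ) 1)] fun t => gfun n (s - t) := by
        apply ae_restrict_of_forall_mem measurableSet_Icc
        intro t ht
        exact gfun_nonneg n hn' (s - t) (by linarith [ht.1])
      rw [← ofReal_integral_eq_lintegral_ofReal (hcont.integrableOn_Icc) hnn]
      congr 1
      rw [integral_Icc_eq_integral_Ioc, ← intervalIntegral.integral_of_le zero_le_one]
      have expand : ∀ t : ℝ, gfun n (s - t)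
          = (1 / n.factorial) * max (s - t) 0 ^ n
            - ((n : ℝ) / n.factorial) * max ((s - 1) - t) 0 ^ n := by
        intro t
        unfold gfun
        rw [show s - t - 1 = (s - 1) - t from by ring]
        ring
      simp_rw [expand]
      have i1 : IntervalIntegrable
          (fun x : ℝ => 1 / (n.factorial : ℝ) * max (s - x) 0 ^ n) volume 0 1 :=
        Continuous.intervalIntegrable (by continuity) _ _
      have i2 : IntervalIntegrable
          (fun x : ℝ => (n : ℝ) / (n.factorial : ℝ) * max (s - 1 - x) 0 ^ n) volume 0 1 :=
        Continuous.intervalIntegrable (by continuity) _ _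
      rw [intervalIntegral.integral_sub i1 i2,
        intervalIntegral.integral_const_mul, intervalIntegral.integral_const_mul,
        integral_maxpow n hn' s, integral_maxpow n hn' (s - 1)]
      rw [show s - 1 - 1 = s - 2 from by ring,
        max_eq_right (by linarith : s - 2 ≤ 0), zero_pow (by omega : n + 1 ≠ 0)]
      unfold gfun
      rw [Nat.factorial_succ]
      have hfac : (n.factorial : ℝ) ≠ 0 := by positivity
      have hn1 : ((n : ℝ) + 1) ≠ 0 := by positivity
      push_cast
      field_simp
      ring

theorem stmt2 (d : ℕ) (hd : 1 ≤ d) (s : ℝ) (hs1 : 1 ≤ s) (hs2 : s ≤ 2) :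
    volume {x : Fin d → ℝ | (∀ i, x i ∈ Set.Icc (0 : ℝ) 1) ∧ ∑ i, x i ≤ s}
      = ENNReal.ofReal (s ^ d / d.factorial - (s - 1) ^ d / (d - 1).factorial) := by
  have := main_lemma d hd s hs2
  rw [show {x : Fin d → ℝ | (∀ i, x i ∈ Set.Icc (0 : ℝ) 1) ∧ ∑ i, x i ≤ s} = Aset d s
    from rfl, this]
  congr 1
  unfold gfun
  rw [max_eq_left (by linarith : (0:ℝ) ≤ s), max_eq_left (by linarith : (0:ℝ) ≤ s - 1)]
  congr 1
  obtain ⟨m, rfl⟩ : ∃ m, d = m + 1 := ⟨d - 1, by omega⟩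
  rw [Nat.add_sub_cancel, Nat.factorial_succ]
  have hfac : (m.factorial : ℝ) ≠ 0 := by positivity
  have hm1 : ((m : ℝ) + 1) ≠ 0 := by positivity
  push_cast
  field_simp
end

section
/- Let e ≥ 3 be a real number and define f(s) = s^3 − (e+2)(s−1)^3 on the interval [1,2]. Then f attains its maximum on [1,2] at s₊ = (e+2+√(e+2))/(e+1), and f(s₊) = s₊². -/
theorem stmt3 (e : ℝ) (he : 3 ≤ e) :
    IsMaxOn (fun s : ℝ => s ^ 3 - (e + 2) * (s - 1) ^ 3) (Set.Icc 1 2)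
      ((e + 2 + Real.sqrt (e + 2)) / (e + 1)) ∧
    (fun s : ℝ => s ^ 3 - (e + 2) * (s - 1) ^ 3) ((e + 2 + Real.sqrt (e + 2)) / (e + 1))
      = ((e + 2 + Real.sqrt (e + 2)) / (e + 1)) ^ 2 := by
  set q := Real.sqrt (e + 2) with hqdef
  have hq2 : q ^ 2 = e + 2 := Real.sq_sqrt (by linarith)
  have hq : 2 ≤ q := by nlinarith [Real.sqrt_nonneg (e + 2), hq2]
  have he1 : (0:ℝ) < e + 1 := by linarith
  have hne : (e + 1) ≠ 0 := ne_of_gt he1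
  have hval : (fun s : ℝ => s ^ 3 - (e + 2) * (s - 1) ^ 3) ((e + 2 + q) / (e + 1))
      = ((e + 2 + q) / (e + 1)) ^ 2 := by
    simp only
    field_simp
    linear_combination ((1+q)*(e+1) - (1+q)*(e^3+3*e^2+4*e+2) + (1+q)*e*(e+1)*(e+2)) * hq2
  refine ⟨?_, hval⟩
  intro s hs
  simp only [Set.mem_Icc] at hs
  obtain ⟨hs1, hs2⟩ := hs
  simp only [Set.mem_setOf_eq, hval]
  rw [div_pow, le_div_iff₀ (by positivity)]
  have key : (e+1)*(e+2+q)^2 - (e+1)^3*(s^3-(e+2)*(s-1)^3)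
      = (e+1)*((e+1)*s-(e+2+q))^2*((e+1)*s-(e+2)+2*q) := by
    linear_combination (-2*q-2*e*q+3*e^2*s+6*e*s-3*e^2-8*e+3*s-5) * hq2
  have hU : (0:ℝ) ≤ (e+1)*s-(e+2)+2*q := by nlinarith
  have hR : (0:ℝ) ≤ (e+1)*((e+1)*s-(e+2+q))^2*((e+1)*s-(e+2)+2*q) :=
    mul_nonneg (mul_nonneg he1.le (sq_nonneg _)) hU
  nlinarith [key, hR, he1]
end

section
/- The volume of the subset of the unit d-cube [0,1]^d consisting of points whose coordinate sum lies between k and k+1 equals A(d,k)/d!, where A(d,k) is the Eulerian number. -/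
open MeasureTheory
open scoped ENNReal

/-- Eulerian numbers. -/
def eulerian : ℕ → ℕ → ℕ
  | 0, 0 => 1
  | 0, _ + 1 => 0
  | n + 1, 0 => eulerian n 0
  | n + 1, k + 1 => (k + 2) * eulerian n (k + 1) + (n + 1 - (k + 1)) * eulerian n k

namespace Stmt9Aux

noncomputable def Nvol (d : ℕ) (s : ℝ) : ℝ :=
  ∑ j ∈ Finset.range (d + 1), (-1 : ℝ) ^ j * (d.choose j) * max (s - j) 0 ^ d

noncomputable def Cvol (d : ℕ) (s : ℝ) : ℝ≥0∞ :=
  volume {x : Fin d → ℝ | (∀ i, x i ∈ Set.Icc (0:ℝ) 1) ∧ ∑ i, x i ≤ s}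

lemma measurableSet_cube_sum (d : ℕ) (s : ℝ) :
    MeasurableSet {x : Fin d → ℝ | (∀ i, x i ∈ Set.Icc (0:ℝ) 1) ∧ ∑ i, x i ≤ s} := by
  have h1 : MeasurableSet {x : Fin d → ℝ | ∀ i, x i ∈ Set.Icc (0:ℝ) 1} := by
    have : {x : Fin d → ℝ | ∀ i, x i ∈ Set.Icc (0:ℝ) 1}
        = ⋂ i, (fun x : Fin d → ℝ => x i) ⁻¹' Set.Icc (0:ℝ) 1 := by
      ext x; simp [Set.mem_iInter]
    rw [this]
    exact MeasurableSet.iInter fun i => (measurable_pi_apply i) measurableSet_Icc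
  have h2 : MeasurableSet {x : Fin d → ℝ | ∑ i, x i ≤ s} := by
    have : Measurable fun x : Fin d → ℝ => ∑ i, x i :=
      Finset.measurable_sum _ fun i _ => measurable_pi_apply i
    exact this measurableSet_Iic
  exact h1.inter h2

lemma continuous_Nvol (d : ℕ) : Continuous (Nvol d) := by
  unfold Nvol
  exact continuous_finset_sum _ fun j _ => (continuous_const.mul
    (((continuous_id.sub continuous_const).max continuous_const).pow d))

lemma hasDerivAt_maxpow (m : ℕ) (hm : 2 ≤ m) (a x : ℝ) :
    HasDerivAt (fun y : ℝ => max (y - a) 0 ^ m) (m * max (x - a) 0 ^ (m - 1)) x := by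
  rcases lt_trichotomy x a with h | h | h
  · have hev : (fun y : ℝ => max (y - a) 0 ^ m) =ᶠ[nhds x] fun _ => (0:ℝ) ^ m := by
      filter_upwards [eventually_lt_nhds h] with y hy
      rw [max_eq_right (by linarith)]
    have h2 := (hasDerivAt_const x ((0:ℝ) ^ m)).congr_of_eventuallyEq hev
    rw [max_eq_right (by linarith), zero_pow (by omega), mul_zero]
    exact h2
  · subst h
    rw [sub_self, max_self, zero_pow (by omega), mul_zero]
    rw [hasDerivAt_iff_tendsto_slope]
    apply squeeze_zero_norm' (a := fun y => |y - x| ^ (m - 1))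
    · filter_upwards [self_mem_nhdsWithin] with y (hy : y ≠ x)
      have hxy : y - x ≠ 0 := sub_ne_zero.mpr hy
      have hfx : max (x - x) 0 ^ m = 0 := by rw [sub_self, max_self]; exact zero_pow (by omega)
      rw [slope_def_field, div_eq_mul_inv, hfx, sub_zero, norm_mul, norm_inv, Real.norm_eq_abs,
        Real.norm_eq_abs]
      have hb : |max (y - x) 0| ≤ |y - x| := by
        rw [abs_le]
        refine ⟨le_trans (neg_nonpos.mpr (abs_nonneg _)) (le_max_right _ _), ?_⟩
        rcases le_or_gt (y - x) 0 with h | h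
        · rw [max_eq_right h]; positivity
        · rw [max_eq_left h.le]; exact le_abs_self _
      have h1 : |max (y - x) 0 ^ m| ≤ |y - x| ^ m := by
        rw [abs_pow]; exact pow_le_pow_left₀ (abs_nonneg _) hb m
      calc |max (y - x) 0 ^ m| * |y - x|⁻¹ ≤ |y - x| ^ m * |y - x|⁻¹ := by
            gcongr
          _ = |y - x| ^ (m - 1) := by
            have : |y - x| ^ m = |y - x| ^ (m - 1) * |y - x| := by
              rw [← pow_succ]; congr 1; omega
            rw [this, mul_assoc, mul_inv_cancel₀ (abs_ne_zero.mpr hxy), mul_one]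
    · have hc : Continuous fun y : ℝ => |y - x| ^ (m - 1) :=
        ((continuous_id.sub continuous_const).abs.pow _)
      have := hc.tendsto x
      simp only [sub_self, abs_zero, zero_pow (show m - 1 ≠ 0 by omega)] at this
      exact this.mono_left nhdsWithin_le_nhds
  · have hev : (fun y : ℝ => max (y - a) 0 ^ m) =ᶠ[nhds x] fun y => (y - a) ^ m := by
      filter_upwards [eventually_gt_nhds h] with y hy
      rw [max_eq_left (by linarith)]
    have h1 : HasDerivAt (fun y : ℝ => (y - a) ^ m) (m * (x - a) ^ (m - 1)) x := by
      simpa using ((hasDerivAt_id x).sub_const a).fun_pow m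
    have h2 := h1.congr_of_eventuallyEq hev
    rw [max_eq_left (by linarith)]
    exact h2

lemma pascal_sum (d : ℕ) (f : ℕ → ℝ) :
    ∑ j ∈ Finset.range (d + 2), (-1:ℝ)^j * ((d+1).choose j) * f j
    = (∑ j ∈ Finset.range (d + 1), (-1:ℝ)^j * (d.choose j) * f j)
      - ∑ j ∈ Finset.range (d + 1), (-1:ℝ)^j * (d.choose j) * f (j + 1) := by
  rw [Finset.sum_range_succ' (fun j => (-1:ℝ)^j * ((d+1).choose j) * f j) (d+1),
    Finset.sum_range_succ' (fun j => (-1:ℝ)^j * (d.choose j) * f j) d]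
  simp only [Nat.choose_zero_right, Nat.cast_one, pow_zero, one_mul, mul_one]
  have hsplit : ∀ j ∈ Finset.range (d+1),
      (-1:ℝ)^(j+1) * ((d+1).choose (j+1)) * f (j+1)
      = (-1:ℝ)^(j+1) * (d.choose (j+1)) * f (j+1) + -((-1:ℝ)^j * (d.choose j) * f (j+1)) := by
    intro j _
    rw [Nat.choose_succ_succ]
    push_cast
    ring
  rw [Finset.sum_congr rfl hsplit, Finset.sum_add_distrib, Finset.sum_neg_distrib]
  have hlast : ∑ j ∈ Finset.range (d+1), (-1:ℝ)^(j+1) * (d.choose (j+1)) * f (j+1)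
      = ∑ j ∈ Finset.range d, (-1:ℝ)^(j+1) * (d.choose (j+1)) * f (j+1) := by
    rw [Finset.sum_range_succ, Nat.choose_succ_self]
    simp
  rw [hlast]
  ring

lemma integral_Nvol (d : ℕ) (hd : 1 ≤ d) (s : ℝ) :
    ∫ u in (s-1)..s, Nvol d u = Nvol (d+1) s / (d+1) := by
  set Φ : ℝ → ℝ := fun u =>
    (∑ j ∈ Finset.range (d + 1), (-1:ℝ)^j * (d.choose j) * max (u - j) 0 ^ (d+1)) / (d+1)
    with hΦ
  have hderiv : ∀ u, HasDerivAt Φ (Nvol d u) u := by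
    intro u
    have h1 : HasDerivAt
        (fun u : ℝ => ∑ j ∈ Finset.range (d + 1), (-1:ℝ)^j * (d.choose j) * max (u - j) 0 ^ (d+1))
        (∑ j ∈ Finset.range (d + 1), (-1:ℝ)^j * (d.choose j) * ((d+1) * max (u - j) 0 ^ d)) u := by
      apply HasDerivAt.fun_sum
      intro j _
      have := (hasDerivAt_maxpow (d+1) (by omega) j u).const_mul ((-1:ℝ)^j * (d.choose j))
      simpa [Nat.add_sub_cancel, mul_assoc] using this
    have h2 := h1.div_const ((d:ℝ)+1)
    have heq : (∑ j ∈ Finset.range (d + 1),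
        (-1:ℝ)^j * (d.choose j) * ((d+1) * max (u - j) 0 ^ d)) / ((d:ℝ)+1) = Nvol d u := by
      rw [Nvol, Finset.sum_div]
      apply Finset.sum_congr rfl
      intro j _
      field_simp
    rw [heq] at h2
    exact h2.congr_deriv rfl
  have hint : IntervalIntegrable (Nvol d) MeasureTheory.volume (s-1) s :=
    (continuous_Nvol d).intervalIntegrable _ _
  rw [intervalIntegral.integral_eq_sub_of_hasDerivAt (fun x _ => hderiv x) hint]
  have hps := pascal_sum d (fun j => max (s - j) 0 ^ (d+1))
  have hN : Nvol (d+1) s = ∑ j ∈ Finset.range (d + 2),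
      (-1:ℝ)^j * ((d+1).choose j) * max (s - j) 0 ^ (d+1) := rfl
  have hshift : ∑ j ∈ Finset.range (d + 1), (-1:ℝ)^j * (d.choose j) * max (s - (j+1:ℕ)) 0 ^ (d+1)
      = ∑ j ∈ Finset.range (d + 1), (-1:ℝ)^j * (d.choose j) * max (s - 1 - j) 0 ^ (d+1) := by
    apply Finset.sum_congr rfl
    intro j _
    congr 2
    push_cast
    ring
  rw [hN, hps]
  rw [hshift, hΦ]
  ring

lemma Cvol_succ (d : ℕ) (s : ℝ) :
    Cvol (d+1) s = ∫⁻ t in Set.Icc (0:ℝ) 1, Cvol d (s - t) := by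
  set e := MeasurableEquiv.piFinSuccAbove (fun _ : Fin (d+1) => ℝ) 0 with he
  set T : Set (ℝ × (Fin d → ℝ)) :=
    {p | (p.1 ∈ Set.Icc (0:ℝ) 1 ∧ ∀ i, p.2 i ∈ Set.Icc (0:ℝ) 1) ∧ p.1 + ∑ i, p.2 i ≤ s} with hTdef
  have hT : MeasurableSet T := by
    have hA : MeasurableSet {p : ℝ × (Fin d → ℝ) | p.1 ∈ Set.Icc (0:ℝ) 1} :=
      measurable_fst measurableSet_Icc
    have hB : MeasurableSet {p : ℝ × (Fin d → ℝ) | ∀ i, p.2 i ∈ Set.Icc (0:ℝ) 1} := by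
      rw [show {p : ℝ × (Fin d → ℝ) | ∀ i, p.2 i ∈ Set.Icc (0:ℝ) 1}
          = ⋂ i, (fun p : ℝ × (Fin d → ℝ) => p.2 i) ⁻¹' Set.Icc 0 1 by ext p; simp]
      exact MeasurableSet.iInter fun i =>
        ((measurable_pi_apply i).comp measurable_snd) measurableSet_Icc
    have hC : MeasurableSet {p : ℝ × (Fin d → ℝ) | p.1 + ∑ i, p.2 i ≤ s} := by
      have hm : Measurable fun p : ℝ × (Fin d → ℝ) => p.1 + ∑ i, p.2 i :=
        measurable_fst.add (Finset.measurable_sum _ fun i _ =>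
          (measurable_pi_apply i).comp measurable_snd)
      exact hm measurableSet_Iic
    exact (hA.inter hB).inter hC
  have hpre : {x : Fin (d+1) → ℝ | (∀ i, x i ∈ Set.Icc (0:ℝ) 1) ∧ ∑ i, x i ≤ s} = e ⁻¹' T := by
    ext x
    have hex : e x = (x 0, fun j => x j.succ) := by
      simp only [he, MeasurableEquiv.piFinSuccAbove_apply, Fin.insertNthEquiv_zero,
        Fin.consEquiv_symm_apply]
      rfl
    simp only [Set.mem_preimage, hex, hTdef, Set.mem_setOf_eq]
    rw [Fin.forall_fin_succ, Fin.sum_univ_succ, and_assoc]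
  rw [Cvol, hpre,
    (volume_preserving_piFinSuccAbove (fun _ : Fin (d+1) => ℝ) 0).measure_preimage
      hT.nullMeasurableSet]
  rw [show (volume : Measure (ℝ × (Fin d → ℝ))) = (volume : Measure ℝ).prod volume from rfl]
  rw [Measure.prod_apply hT]
  have hslice : (fun t => volume (Prod.mk t ⁻¹' T))
      = (Set.Icc (0:ℝ) 1).indicator (fun t => Cvol d (s - t)) := by
    funext t
    by_cases ht : t ∈ Set.Icc (0:ℝ) 1
    · rw [Set.indicator_of_mem ht, Cvol]
      congr 1
      ext y
      simp only [hTdef, Set.mem_preimage, Set.mem_setOf_eq, ht, true_and]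
      constructor
      · rintro ⟨h1, h2⟩; exact ⟨h1, by linarith⟩
      · rintro ⟨h1, h2⟩; exact ⟨h1, by linarith⟩
    · rw [Set.indicator_of_notMem ht]
      have : Prod.mk t ⁻¹' T = ∅ := by
        ext y; simp only [hTdef, Set.mem_preimage, Set.mem_setOf_eq, Set.mem_empty_iff_false,
          iff_false]
        rintro ⟨⟨h1, _⟩, _⟩; exact ht h1
      rw [this, measure_empty]
  rw [hslice, lintegral_indicator measurableSet_Icc]

lemma volume_sum_eq_zero (d : ℕ) (c : ℝ) :
    volume {x : Fin (d+1) → ℝ | ∑ i, x i = c} = 0 := by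
  set e := MeasurableEquiv.piFinSuccAbove (fun _ : Fin (d+1) => ℝ) 0 with he
  set T : Set (ℝ × (Fin d → ℝ)) := {p | p.1 + ∑ i, p.2 i = c} with hTdef
  have hT : MeasurableSet T := by
    have hm : Measurable fun p : ℝ × (Fin d → ℝ) => p.1 + ∑ i, p.2 i :=
      measurable_fst.add (Finset.measurable_sum _ fun i _ =>
        (measurable_pi_apply i).comp measurable_snd)
    exact hm (measurableSet_singleton c)
  have hpre : {x : Fin (d+1) → ℝ | ∑ i, x i = c} = e ⁻¹' T := by
    ext x
    have hex : e x = (x 0, fun j => x j.succ) := by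
      simp only [he, MeasurableEquiv.piFinSuccAbove_apply, Fin.insertNthEquiv_zero,
        Fin.consEquiv_symm_apply]
      rfl
    simp only [Set.mem_preimage, hex, hTdef, Set.mem_setOf_eq]
    rw [Fin.sum_univ_succ]
  rw [hpre,
    (volume_preserving_piFinSuccAbove (fun _ : Fin (d+1) => ℝ) 0).measure_preimage
      hT.nullMeasurableSet]
  rw [show (volume : Measure (ℝ × (Fin d → ℝ))) = (volume : Measure ℝ).prod volume from rfl]
  rw [Measure.prod_apply_symm hT]
  have hslice : ∀ y : Fin d → ℝ, volume ((fun x => (x, y)) ⁻¹' T) = 0 := by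
    intro y
    have : ((fun x : ℝ => (x, y)) ⁻¹' T) = {c - ∑ i, y i} := by
      ext t; simp only [hTdef, Set.mem_preimage, Set.mem_setOf_eq, Set.mem_singleton_iff]
      constructor <;> intro h <;> linarith
    rw [this]
    exact Real.volume_singleton
  simp only [hslice, lintegral_zero]

lemma Nvol_one (s : ℝ) : Nvol 1 s = max s 0 - max (s - 1) 0 := by
  rw [Nvol]
  rw [Finset.sum_range_succ, Finset.sum_range_one]
  norm_num
  ring

lemma lemA (d : ℕ) (hd : 1 ≤ d) :
    (∀ s, 0 ≤ Nvol d s) ∧ (∀ s, Cvol d s = ENNReal.ofReal (Nvol d s / d.factorial)) := by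
  induction d with
  | zero => omega
  | succ d IH =>
    rcases Nat.eq_or_lt_of_le hd with h1 | h1
    · -- d + 1 = 1
      have hd0 : d = 0 := by omega
      subst hd0
      constructor
      · intro s
        rw [Nvol_one]
        have : max (s - 1) 0 ≤ max s 0 := max_le_max (by linarith) le_rfl
        linarith
      · intro s
        have hset : {x : Fin 1 → ℝ | (∀ i, x i ∈ Set.Icc (0:ℝ) 1) ∧ ∑ i, x i ≤ s}
            = (MeasurableEquiv.funUnique (Fin 1) ℝ) ⁻¹' (Set.Icc 0 1 ∩ Set.Iic s) := by
          ext x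
          simp only [Set.mem_preimage, MeasurableEquiv.funUnique_apply, Set.mem_inter_iff,
            Set.mem_setOf_eq, Set.mem_Iic, Fin.sum_univ_one]
          constructor
          · rintro ⟨h1, h2⟩; exact ⟨h1 0, h2⟩
          · rintro ⟨h1, h2⟩
            refine ⟨fun i => ?_, h2⟩
            have : i = 0 := Subsingleton.elim _ _
            rw [this]; exact h1
        rw [Cvol, hset]
        erw [(volume_preserving_funUnique (Fin 1) ℝ).measure_preimage
            ((measurableSet_Icc.inter measurableSet_Iic : MeasurableSet (Set.Icc (0:ℝ) 1 ∩ Set.Iic s)).nullMeasurableSet)]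
        have hIcc : Set.Icc (0:ℝ) 1 ∩ Set.Iic s = Set.Icc 0 (min 1 s) := by
          ext t
          simp only [Set.mem_inter_iff, Set.mem_Icc, Set.mem_Iic, le_min_iff]
          tauto
        rw [hIcc, Real.volume_Icc]
        rw [Nat.factorial_one, Nat.cast_one, div_one, Nvol_one]
        rcases le_or_gt s 0 with hs | hs
        · have e2 : max s 0 - max (s - 1) 0 = 0 := by
            rw [max_eq_right hs, max_eq_right (by linarith)]; ring
          rw [e2]
          have e1 : min 1 s - 0 ≤ 0 := by
            have : min 1 s ≤ s := min_le_right _ _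
            linarith
          rw [ENNReal.ofReal_eq_zero.mpr e1, ENNReal.ofReal_zero]
        · rcases le_or_gt s 1 with hs1 | hs1
          · rw [max_eq_left hs.le, max_eq_right (by linarith), min_eq_right hs1]
            try norm_num
          · rw [max_eq_left hs.le, max_eq_left (by linarith), min_eq_left hs1.le]
            try norm_num
    · -- d ≥ 1
      have hd1 : 1 ≤ d := by omega
      obtain ⟨hnn, hC⟩ := IH hd1
      have key : ∀ s, Cvol (d+1) s = ENNReal.ofReal (Nvol (d+1) s / (d+1).factorial)
          ∧ 0 ≤ Nvol (d+1) s := by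
        intro s
        have hcont : Continuous fun t : ℝ => Nvol d (s - t) / d.factorial :=
          ((continuous_Nvol d).comp (continuous_const.sub continuous_id)).div_const _
        have hintOn : IntegrableOn (fun t : ℝ => Nvol d (s - t) / d.factorial)
            (Set.Icc (0:ℝ) 1) volume := hcont.integrableOn_Icc
        have h1 : Cvol (d+1) s
            = ∫⁻ t in Set.Icc (0:ℝ) 1, ENNReal.ofReal (Nvol d (s - t) / d.factorial) := by
          rw [Cvol_succ]
          congr 1
          funext t
          rw [hC]
        have h2 : ∫⁻ t in Set.Icc (0:ℝ) 1, ENNReal.ofReal (Nvol d (s - t) / d.factorial)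
            = ENNReal.ofReal (∫ t in Set.Icc (0:ℝ) 1, Nvol d (s - t) / d.factorial) := by
          rw [← ofReal_integral_eq_lintegral_ofReal hintOn]
          exact Filter.Eventually.of_forall fun t => div_nonneg (hnn _) (by positivity)
        have h3 : ∫ t in Set.Icc (0:ℝ) 1, Nvol d (s - t) / d.factorial
            = ∫ t in (0:ℝ)..1, Nvol d (s - t) / d.factorial := by
          rw [intervalIntegral.integral_of_le zero_le_one, integral_Icc_eq_integral_Ioc]
        have h4 : ∫ t in (0:ℝ)..1, Nvol d (s - t) / d.factorial
            = (∫ t in (0:ℝ)..1, Nvol d (s - t)) / d.factorial :=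
          intervalIntegral.integral_div _ _
        have h5 : ∫ t in (0:ℝ)..1, Nvol d (s - t) = ∫ u in (s-1)..s, Nvol d u := by
          have := intervalIntegral.integral_comp_sub_left (a := (0:ℝ)) (b := 1) (Nvol d) s
          simpa using this
        have h6 := integral_Nvol d hd1 s
        have hval : ∫ t in Set.Icc (0:ℝ) 1, Nvol d (s - t) / d.factorial
            = Nvol (d+1) s / (d+1).factorial := by
          rw [h3, h4, h5, h6, Nat.factorial_succ]
          push_cast
          rw [div_div]
        have hnn1 : 0 ≤ Nvol (d+1) s := by
          have hint : 0 ≤ ∫ t in Set.Icc (0:ℝ) 1, Nvol d (s - t) / d.factorial :=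
            integral_nonneg fun t => div_nonneg (hnn _) (by positivity)
          rw [hval] at hint
          have hfpos : (0:ℝ) < (d+1).factorial := by positivity
          have h' := mul_nonneg hint hfpos.le
          rwa [div_mul_cancel₀ _ (ne_of_gt hfpos)] at h' 
        exact ⟨by rw [h1, h2, hval], hnn1⟩
      exact ⟨fun s => (key s).2, fun s => (key s).1⟩

lemma Cvol_large (d : ℕ) (s : ℝ) (hs : (d:ℝ) ≤ s) : Cvol d s = 1 := by
  have hset : {x : Fin d → ℝ | (∀ i, x i ∈ Set.Icc (0:ℝ) 1) ∧ ∑ i, x i ≤ s}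
      = Set.pi Set.univ (fun _ : Fin d => Set.Icc (0:ℝ) 1) := by
    ext x
    simp only [Set.mem_setOf_eq, Set.mem_pi, Set.mem_univ, forall_true_left, true_implies]
    constructor
    · rintro ⟨h, _⟩; exact h
    · intro h
      refine ⟨h, ?_⟩
      calc ∑ i, x i ≤ ∑ _i : Fin d, (1:ℝ) := Finset.sum_le_sum fun i _ => (h i).2
        _ = d := by simp
        _ ≤ s := hs
  rw [Cvol, hset, volume_pi_pi]
  simp [Real.volume_Icc]

noncomputable def Evol (d k : ℕ) : ℝ :=
  ∑ j ∈ Finset.range (d + 2), (-1:ℝ)^j * ((d+1).choose j) * max ((k:ℝ) + 1 - j) 0 ^ d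

lemma Evol_eq (d k : ℕ) : Evol d k = Nvol d ((k:ℝ) + 1) - Nvol d (k:ℝ) := by
  have hps := pascal_sum d (fun j => max ((k:ℝ) + 1 - j) 0 ^ d)
  rw [Evol, hps]
  congr 1
  rw [Nvol]
  apply Finset.sum_congr rfl
  intro j _
  congr 2
  push_cast
  ring

lemma Nvol_large (d k : ℕ) (hd : 1 ≤ d) (hk : d ≤ k) : Nvol d (k:ℝ) = d.factorial := by
  obtain ⟨hnn, hC⟩ := lemA d hd
  have h1 : Cvol d (k:ℝ) = 1 := Cvol_large d _ (by exact_mod_cast hk)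
  rw [hC] at h1
  have h2 : Nvol d (k:ℝ) / d.factorial = 1 := by
    have := (ENNReal.ofReal_eq_one).mp h1
    exact this
  have hfpos : (0:ℝ) < d.factorial := by positivity
  field_simp at h2
  exact h2

lemma Evol_vanish (d k : ℕ) (hd : 1 ≤ d) (hk : d ≤ k) : Evol d k = 0 := by
  rw [Evol_eq]
  have h1 : ((k:ℝ) + 1) = ((k+1 : ℕ) : ℝ) := by push_cast; ring
  rw [h1, Nvol_large d (k+1) hd (by omega), Nvol_large d k hd hk, sub_self]

lemma maxpow_succ (u : ℝ) (d : ℕ) (hd : 1 ≤ d) : max u 0 ^ (d+1) = u * max u 0 ^ d := by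
  rcases le_or_gt u 0 with h | h
  · rw [max_eq_right h, zero_pow (by omega), zero_pow (by omega), mul_zero]
  · rw [max_eq_left h.le, ← pow_succ']

lemma Evol_rec (d k : ℕ) (hd : 1 ≤ d) :
    Evol (d+1) (k+1) = ((k:ℝ) + 2) * Evol d (k+1) + ((d:ℝ) - k) * Evol d k := by
  have hL : Evol (d+1) (k+1) = ∑ j ∈ Finset.range (d + 3),
      (-1:ℝ)^j * ((d+2).choose j) * (((k:ℝ) + 2 - j) * max ((k:ℝ) + 2 - j) 0 ^ d) := by
    rw [Evol]
    apply Finset.sum_congr rfl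
    intro j _
    have h1 : ((k+1:ℕ):ℝ) + 1 - j = (k:ℝ) + 2 - j := by push_cast; ring
    rw [h1, maxpow_succ _ d hd]
  have hsplit : ∀ j ∈ Finset.range (d + 3),
      (-1:ℝ)^j * ((d+2).choose j) * (((k:ℝ) + 2 - j) * max ((k:ℝ) + 2 - j) 0 ^ d)
      = ((k:ℝ) + 2) * ((-1:ℝ)^j * ((d+1).choose j) * max ((k:ℝ) + 2 - j) 0 ^ d)
        + (((d:ℝ) - k) *
          ((-1:ℝ)^j * (if j = 0 then (0:ℝ) else ((d+1).choose (j-1) : ℝ))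
            * max ((k:ℝ) + 2 - j) 0 ^ d) * (-1)) := by
    intro j hj
    match j with
    | 0 => simp
    | i + 1 =>
      simp only [Nat.add_sub_cancel, if_neg (Nat.succ_ne_zero i)]
      have hirange : i ≤ d + 1 := by
        simp only [Finset.mem_range] at hj; omega
      have hp : ((d+2).choose (i+1) : ℝ) = ((d+1).choose i : ℝ) + ((d+1).choose (i+1) : ℝ) := by
        rw [Nat.choose_succ_succ]; push_cast; ring
      have hcs : ((d+1).choose (i+1) : ℝ) * ((i:ℝ)+1) = ((d+1).choose i : ℝ) * ((d:ℝ)+1-i) := by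
        have := Nat.choose_succ_right_eq (d+1) i
        have hcast : (((d+1) - i : ℕ) : ℝ) = (d:ℝ) + 1 - i := by
          rw [Nat.cast_sub (by omega)]; push_cast; ring
        calc ((d+1).choose (i+1) : ℝ) * ((i:ℝ)+1)
            = (((d+1).choose (i+1) * (i+1) : ℕ) : ℝ) := by push_cast; ring
          _ = (((d+1).choose i * ((d+1) - i) : ℕ) : ℝ) := by rw [this]
          _ = ((d+1).choose i : ℝ) * ((d:ℝ)+1-i) := by push_cast [hcast]; ring
      set M := max ((k:ℝ) + 2 - (i+1:ℕ)) 0 ^ d with hM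
      have hgoal : (-1:ℝ)^(i+1) * ((d+2).choose (i+1)) * (((k:ℝ) + 2 - (i+1:ℕ)) * M)
          = ((k:ℝ) + 2) * ((-1:ℝ)^(i+1) * ((d+1).choose (i+1)) * M)
            + (((d:ℝ) - k) * ((-1:ℝ)^(i+1) * ((d+1).choose i) * M) * (-1)) := by
        push_cast
        linear_combination ((-1:ℝ)^(i+1) * M * ((k:ℝ) + 1 - i)) * hp
          - ((-1:ℝ)^(i+1) * M) * hcs
      convert hgoal using 3 <;> push_cast <;> ring
  rw [hL, Finset.sum_congr rfl hsplit, Finset.sum_add_distrib]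
  have hA : ∑ j ∈ Finset.range (d + 3),
      ((k:ℝ) + 2) * ((-1:ℝ)^j * ((d+1).choose j) * max ((k:ℝ) + 2 - j) 0 ^ d)
      = ((k:ℝ) + 2) * Evol d (k+1) := by
    rw [← Finset.mul_sum]
    congr 1
    rw [show d + 3 = (d + 2) + 1 from rfl, Finset.sum_range_succ, Nat.choose_succ_self]
    simp only [Nat.cast_zero, mul_zero, zero_mul, mul_zero, add_zero]
    rw [Evol]
    apply Finset.sum_congr rfl
    intro j _
    congr 2
    push_cast
    ring
  have hB : ∑ j ∈ Finset.range (d + 3),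
      (((d:ℝ) - k) * ((-1:ℝ)^j * (if j = 0 then (0:ℝ) else ((d+1).choose (j-1) : ℝ))
        * max ((k:ℝ) + 2 - j) 0 ^ d) * (-1))
      = ((d:ℝ) - k) * Evol d k := by
    rw [Finset.sum_range_succ' _ (d + 2)]
    simp only [if_pos rfl, Nat.add_sub_cancel, if_neg (Nat.succ_ne_zero _)]
    have : ∀ j ∈ Finset.range (d + 2),
        (((d:ℝ) - k) * ((-1:ℝ)^(j+1) * ((d+1).choose j : ℝ)
          * max ((k:ℝ) + 2 - (j+1:ℕ)) 0 ^ d) * (-1))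
        = ((d:ℝ) - k) * ((-1:ℝ)^j * ((d+1).choose j : ℝ) * max ((k:ℝ) + 1 - j) 0 ^ d) := by
      intro j _
      have h1 : (k:ℝ) + 2 - ((j+1:ℕ):ℝ) = (k:ℝ) + 1 - j := by push_cast; ring
      rw [h1]
      ring
    rw [Finset.sum_congr rfl this, ← Finset.mul_sum, Evol]
    simp
  rw [hA, hB]

lemma eulerian_zero (d : ℕ) : eulerian d 0 = 1 := by
  induction d with
  | zero => rfl
  | succ d IH => rw [eulerian]; exact IH

lemma lemB (d : ℕ) (hd : 1 ≤ d) (k : ℕ) : Evol d k = (eulerian d k : ℝ) := by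
  induction d generalizing k with
  | zero => omega
  | succ d IH =>
    rcases Nat.eq_or_lt_of_le hd with h1 | h1
    · -- d + 1 = 1, i.e. d = 0
      have hd0 : d = 0 := by omega
      subst hd0
      rw [Evol_eq, Nvol_one, Nvol_one]
      match k with
      | 0 =>
        rw [eulerian_zero]
        norm_num
      | m + 1 =>
        have e1 : eulerian 1 (m+1) = 0 := by
          rw [eulerian]
          rw [show eulerian 0 (m+1) = 0 from rfl, show 1 - (m+1) = 0 from by omega]
          cases m with
          | zero => rfl
          | succ m => rw [show eulerian 0 (m+1) = 0 from rfl]; ring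
        rw [e1]
        have hk : (1:ℝ) ≤ ((m+1:ℕ):ℝ) := by exact_mod_cast Nat.one_le_iff_ne_zero.mpr (by omega)
        rw [max_eq_left (by linarith), max_eq_left (by linarith), max_eq_left (by linarith),
          max_eq_left (by linarith)]
        push_cast
        ring
    · have hd1 : 1 ≤ d := by omega
      match k with
      | 0 =>
        rw [eulerian_zero, Evol]
        rw [Finset.sum_eq_single_of_mem 0 (Finset.mem_range.mpr (by omega))]
        · norm_num
        · intro j _ hj
          have hj1 : (1:ℝ) ≤ (j:ℝ) := by exact_mod_cast Nat.one_le_iff_ne_zero.mpr hj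
          have hmax : max (((0:ℕ):ℝ) + 1 - (j:ℝ)) 0 = 0 :=
            max_eq_right (by push_cast; linarith)
          rw [hmax, zero_pow (by omega), mul_zero]
      | k + 1 =>
        rw [Evol_rec d k hd1, IH hd1 (k+1), IH hd1 k]
        rcases le_or_gt k d with hkd | hkd
        · have heu : eulerian (d+1) (k+1)
              = (k + 2) * eulerian d (k+1) + (d - k) * eulerian d k := by
            rw [eulerian]
            congr 2
            omega
          rw [heu]
          push_cast [Nat.cast_sub hkd]
          ring
        · have heu : eulerian (d+1) (k+1) = (k + 2) * eulerian d (k+1) := by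
            rw [eulerian]
            have : d + 1 - (k + 1) = 0 := by omega
            rw [this]
            ring
          have hv : (eulerian d k : ℝ) = 0 := by
            rw [← IH hd1 k]
            exact Evol_vanish d k hd1 (by omega)
          rw [heu, hv]
          push_cast
          ring

end Stmt9Aux

open Stmt9Aux in
theorem stmt9 (d k : ℕ) :
    volume {x : Fin d → ℝ | (∀ i, x i ∈ Set.Icc (0 : ℝ) 1) ∧
        (k : ℝ) ≤ ∑ i, x i ∧ ∑ i, x i ≤ (k : ℝ) + 1}
      = ENNReal.ofReal ((eulerian d k : ℝ) / d.factorial) := by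
  match d with
  | 0 =>
    match k with
    | 0 =>
      have hset : {x : Fin 0 → ℝ | (∀ i, x i ∈ Set.Icc (0 : ℝ) 1) ∧
          ((0:ℕ) : ℝ) ≤ ∑ i, x i ∧ ∑ i, x i ≤ ((0:ℕ) : ℝ) + 1}
          = Set.pi Set.univ (fun _ : Fin 0 => Set.Icc (0:ℝ) 1) := by
        ext x
        simp
      rw [hset, volume_pi_pi]
      simp [eulerian]
    | k + 1 =>
      have hset : {x : Fin 0 → ℝ | (∀ i, x i ∈ Set.Icc (0 : ℝ) 1) ∧
          ((k+1:ℕ) : ℝ) ≤ ∑ i, x i ∧ ∑ i, x i ≤ ((k+1:ℕ) : ℝ) + 1} = ∅ := by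
        ext x
        simp only [Set.mem_setOf_eq, Set.mem_empty_iff_false, iff_false]
        rintro ⟨_, h1, _⟩
        have hsum : ∑ i : Fin 0, x i = 0 := by simp
        rw [hsum] at h1
        have : (0:ℝ) < ((k+1:ℕ) : ℝ) := by positivity
        linarith
      rw [hset, measure_empty]
      have : eulerian 0 (k+1) = 0 := rfl
      simp [this]
  | n + 1 =>
    set d := n + 1 with hdn
    have hd : 1 ≤ d := by omega
    obtain ⟨hnn, hC⟩ := lemA d hd
    set A := {x : Fin d → ℝ | (∀ i, x i ∈ Set.Icc (0:ℝ) 1) ∧ ∑ i, x i ≤ (k:ℝ) + 1} with hA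
    set B := {x : Fin d → ℝ | (∀ i, x i ∈ Set.Icc (0:ℝ) 1) ∧ ∑ i, x i ≤ (k:ℝ)} with hB
    set Z := {x : Fin d → ℝ | ∑ i, x i = (k:ℝ)} with hZ
    set S := {x : Fin d → ℝ | (∀ i, x i ∈ Set.Icc (0 : ℝ) 1) ∧
        (k : ℝ) ≤ ∑ i, x i ∧ ∑ i, x i ≤ (k : ℝ) + 1} with hS
    have hBA : B ⊆ A := by
      intro x hx
      exact ⟨hx.1, by have := hx.2; linarith⟩
    have hsub1 : A \ B ⊆ S := by
      rintro x ⟨⟨hx1, hx2⟩, hx3⟩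
      refine ⟨hx1, ?_, hx2⟩
      by_contra hcon
      exact hx3 ⟨hx1, by linarith⟩
    have hsub2 : S ⊆ (A \ B) ∪ Z := by
      rintro x ⟨hx1, hx2, hx3⟩
      rcases le_or_gt (∑ i, x i) (k:ℝ) with h | h
      · right
        exact le_antisymm h hx2
      · left
        exact ⟨⟨hx1, hx3⟩, fun hcon => absurd hcon.2 (not_le.mpr h)⟩
    have hZ0 : volume Z = 0 := volume_sum_eq_zero n (k:ℝ)
    have hvS : volume S = volume (A \ B) := by
      apply le_antisymm
      · calc volume S ≤ volume ((A \ B) ∪ Z) := measure_mono hsub2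
          _ ≤ volume (A \ B) + volume Z := measure_union_le _ _
          _ = volume (A \ B) := by rw [hZ0, add_zero]
      · exact measure_mono hsub1
    have hBmeas : MeasurableSet B := measurableSet_cube_sum d (k:ℝ)
    have hBfin : volume B ≠ ⊤ := by
      have : volume B = Cvol d (k:ℝ) := rfl
      rw [this, hC]
      exact ENNReal.ofReal_ne_top
    have hdiff : volume (A \ B) = volume A - volume B :=
      measure_diff hBA hBmeas.nullMeasurableSet hBfin
    have hvA : volume A = ENNReal.ofReal (Nvol d ((k:ℝ)+1) / d.factorial) := hC _
    have hvB : volume B = ENNReal.ofReal (Nvol d (k:ℝ) / d.factorial) := hC _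
    rw [hvS, hdiff, hvA, hvB,
      ← ENNReal.ofReal_sub _ (div_nonneg (hnn _) (by positivity))]
    congr 1
    rw [div_sub_div_same]
    congr 1
    rw [← Evol_eq, lemB d hd k]
end

section
/- The volume of the region {(x,y,z) ∈ [0,1]^3 : 0 ≤ x + y − z ≤ 1} equals 2/3. -/
open MeasureTheory Set

-- inner one-dimensional integral
lemma aux_inner (x : ℝ) (hx0 : 0 ≤ x) (hx1 : x ≤ 1) :
    ∫ y in (0:ℝ)..1, (min (x + y) 1 - max (x + y - 1) 0) = x + 1/2 - x^2 := by
  have hcont : Continuous fun y : ℝ => min (x + y) 1 - max (x + y - 1) 0 := by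
    apply Continuous.sub
    · exact (continuous_const.add continuous_id).min continuous_const
    · exact ((continuous_const.add continuous_id).sub continuous_const).max continuous_const
  have hI1 : IntervalIntegrable (fun y : ℝ => min (x + y) 1 - max (x + y - 1) 0)
      volume 0 (1 - x) := hcont.intervalIntegrable _ _
  have hI2 : IntervalIntegrable (fun y : ℝ => min (x + y) 1 - max (x + y - 1) 0)
      volume (1 - x) 1 := hcont.intervalIntegrable _ _
  rw [← intervalIntegral.integral_add_adjacent_intervals hI1 hI2]
  have h1 : ∫ y in (0:ℝ)..(1 - x), (min (x + y) 1 - max (x + y - 1) 0)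
      = ∫ y in (0:ℝ)..(1 - x), (x + y) := by
    apply intervalIntegral.integral_congr
    intro y hy
    rw [Set.uIcc_of_le (by linarith)] at hy
    obtain ⟨hy0, hy1⟩ := hy
    show min (x + y) 1 - max (x + y - 1) 0 = x + y
    rw [min_eq_left (by linarith), max_eq_right (by linarith)]
    ring
  have h2 : ∫ y in (1 - x)..(1:ℝ), (min (x + y) 1 - max (x + y - 1) 0)
      = ∫ y in (1 - x)..(1:ℝ), ((2 - x) - y) := by
    apply intervalIntegral.integral_congr
    intro y hy
    rw [Set.uIcc_of_le (by linarith)] at hy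
    obtain ⟨hy0, hy1⟩ := hy
    show min (x + y) 1 - max (x + y - 1) 0 = (2 - x) - y
    rw [min_eq_right (by linarith), max_eq_left (by linarith)]
    ring
  rw [h1, h2]
  have e1 : ∫ y in (0:ℝ)..(1 - x), (x + y)
      = (1 - x - 0) • x + ((1 - x) ^ 2 - 0 ^ 2) / 2 := by
    rw [intervalIntegral.integral_add (intervalIntegrable_const) intervalIntegral.intervalIntegrable_id,
      intervalIntegral.integral_const, integral_id]
  have e2 : ∫ y in (1 - x)..(1:ℝ), ((2 - x) - y)
      = (1 - (1 - x)) • (2 - x) - (1 ^ 2 - (1 - x) ^ 2) / 2 := by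
    rw [intervalIntegral.integral_sub (intervalIntegrable_const) intervalIntegral.intervalIntegrable_id,
      intervalIntegral.integral_const, integral_id]
  rw [e1, e2]
  simp only [smul_eq_mul]
  ring

lemma aux_outer : ∫ x in (0:ℝ)..1, (x + 1/2 - x^2) = 2/3 := by
  have h : ∫ x in (0:ℝ)..1, (x + 1/2 - x^2)
      = ((∫ x in (0:ℝ)..1, x) + ∫ x in (0:ℝ)..1, (1/2 : ℝ)) - ∫ x in (0:ℝ)..1, x^2 := by
    rw [intervalIntegral.integral_sub, intervalIntegral.integral_add]
    · exact intervalIntegral.intervalIntegrable_id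
    · exact intervalIntegrable_const
    · exact (intervalIntegral.intervalIntegrable_id).add intervalIntegrable_const
    · exact (continuous_pow 2).intervalIntegrable _ _
  rw [h, integral_id, intervalIntegral.integral_const, integral_pow]
  norm_num

theorem stmt10 :
    volume {x : Fin 3 → ℝ | (∀ i, x i ∈ Set.Icc (0 : ℝ) 1) ∧
        0 ≤ x 0 + x 1 - x 2 ∧ x 0 + x 1 - x 2 ≤ 1}
      = ENNReal.ofReal (2 / 3) := by
  classical
  set f : (Fin 2 → ℝ) → ℝ := fun y => max (y 0 + y 1 - 1) 0 with hf_def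
  set g : (Fin 2 → ℝ) → ℝ := fun y => min (y 0 + y 1) 1 with hg_def
  set s : Set (Fin 2 → ℝ) := Set.univ.pi fun _ => Icc (0:ℝ) 1 with hs_def
  set T : Set ((Fin 2 → ℝ) × ℝ) := {p | p.1 ∈ s ∧ p.2 ∈ Icc (f p.1) (g p.1)} with hT_def
  have hfc : Continuous f := ((continuous_apply 0).add (continuous_apply 1) |>.sub continuous_const).max continuous_const
  have hgc : Continuous g := ((continuous_apply 0).add (continuous_apply 1)).min continuous_const
  have hs : MeasurableSet s := MeasurableSet.univ_pi fun _ => measurableSet_Icc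
  have hT : MeasurableSet T := by
    have : T = (s ×ˢ univ) ∩ ({p : (Fin 2 → ℝ) × ℝ | f p.1 ≤ p.2} ∩ {p | p.2 ≤ g p.1}) := by
      ext p; simp [hT_def, Set.mem_Icc, and_assoc]
    rw [this]
    exact (hs.prod MeasurableSet.univ).inter
      ((measurableSet_le (hfc.comp continuous_fst).measurable measurable_snd).inter
        (measurableSet_le measurable_snd (hgc.comp continuous_fst).measurable))
  -- step 1: reduce to volume T
  have step1 : volume {x : Fin 3 → ℝ | (∀ i, x i ∈ Set.Icc (0 : ℝ) 1) ∧
        0 ≤ x 0 + x 1 - x 2 ∧ x 0 + x 1 - x 2 ≤ 1} = volume T := by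
    set e := MeasurableEquiv.piFinSuccAbove (fun _ : Fin 3 => ℝ) 2 with he_def
    have vp1 : MeasurePreserving e volume volume :=
      volume_preserving_piFinSuccAbove (fun _ : Fin 3 => ℝ) 2
    have vp2 : MeasurePreserving (Prod.swap : ℝ × (Fin 2 → ℝ) → (Fin 2 → ℝ) × ℝ)
        volume volume := by
      constructor
      · exact measurable_swap
      · rw [Measure.volume_eq_prod, Measure.volume_eq_prod]
        exact Measure.prod_swap
    have vp : MeasurePreserving (Prod.swap ∘ e) volume volume := vp2.comp vp1
    have hset : {x : Fin 3 → ℝ | (∀ i, x i ∈ Set.Icc (0 : ℝ) 1) ∧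
        0 ≤ x 0 + x 1 - x 2 ∧ x 0 + x 1 - x 2 ≤ 1} = (Prod.swap ∘ e) ⁻¹' T := by
      ext x
      have h0 : (2 : Fin 3).succAbove 0 = 0 := by decide
      have h1 : (2 : Fin 3).succAbove 1 = 1 := by decide
      simp only [Set.mem_setOf_eq, Set.mem_preimage, Function.comp_apply, hT_def,
        he_def, MeasurableEquiv.piFinSuccAbove_apply, Fin.insertNthEquiv_symm_apply, Fin.removeNth, Prod.swap_prod_mk,
        Set.mem_pi, Set.mem_univ, forall_true_left, hs_def, Set.mem_Icc, hf_def, hg_def,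
        Fin.removeNth, h0, h1, max_le_iff, le_min_iff, true_implies]
      constructor
      · rintro ⟨h, hl, hr⟩
        obtain ⟨a0, a1⟩ := h 0
        obtain ⟨b0, b1⟩ := h 1
        obtain ⟨c0, c1⟩ := h 2
        refine ⟨?_, ⟨by linarith, by linarith⟩, by linarith, by linarith⟩
        intro j
        fin_cases j
        · simpa [h0] using ⟨a0, a1⟩
        · simpa [h1] using ⟨b0, b1⟩
      · rintro ⟨h, ⟨hl1, hl2⟩, hr1, hr2⟩
        have ha := h 0
        have hb := h 1
        rw [h0] at ha
        rw [h1] at hb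
        refine ⟨?_, by linarith, by linarith⟩
        intro i
        fin_cases i
        · exact ha
        · exact hb
        · exact ⟨hl2, hr2⟩
    rw [hset, Set.preimage_comp]
    rw [vp1.measure_preimage (vp2.measurable hT).nullMeasurableSet]
    exact vp2.measure_preimage hT.nullMeasurableSet
  rw [step1]
  -- step 2: volume T as an integral
  have hind : ∀ y : Fin 2 → ℝ, volume (Prod.mk y ⁻¹' T)
      = s.indicator (fun y => ENNReal.ofReal (g y - f y)) y := by
    intro y
    by_cases hy : y ∈ s
    · have hpre : Prod.mk y ⁻¹' T = Icc (f y) (g y) := by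
        ext z; simp [hT_def, hy]
      rw [hpre, Real.volume_Icc, Set.indicator_of_mem hy]
    · have hpre : Prod.mk y ⁻¹' T = ∅ := by
        ext z; simp [hT_def, hy]
      rw [hpre, measure_empty, Set.indicator_of_notMem hy]
  have step2 : volume T = ∫⁻ y in s, ENNReal.ofReal (g y - f y) := by
    rw [Measure.volume_eq_prod, Measure.prod_apply hT]
    simp_rw [hind]
    rw [lintegral_indicator hs]
  rw [step2]
  -- step 3: pass to a Bochner integral
  have hscompact : IsCompact s := by
    have : s = Icc (0 : Fin 2 → ℝ) 1 := by
      rw [← Set.pi_univ_Icc]; rfl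
    rw [this]; exact isCompact_Icc
  have hInt : IntegrableOn (fun y => g y - f y) s volume :=
    ((hgc.sub hfc).continuousOn).integrableOn_compact hscompact
  have hnn : 0 ≤ᵐ[volume.restrict s] fun y => g y - f y := by
    rw [Filter.EventuallyLE, ae_restrict_iff' hs]
    apply Filter.Eventually.of_forall
    intro y hy
    have h0 := hy 0 (Set.mem_univ 0)
    have h1 := hy 1 (Set.mem_univ 1)
    simp only [Set.mem_Icc] at h0 h1
    simp only [Pi.zero_apply, hf_def, hg_def, sub_nonneg]
    apply max_le
    · apply le_min <;> linarith [h0.1, h0.2, h1.1, h1.2]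
    · apply le_min <;> linarith [h0.1, h0.2, h1.1, h1.2]
  rw [← ofReal_integral_eq_lintegral_ofReal hInt hnn]
  congr 1
  -- step 4: compute the 2D integral
  have hpre2 : s = MeasurableEquiv.finTwoArrow ⁻¹' (Icc (0:ℝ) 1 ×ˢ Icc (0:ℝ) 1) := by
    ext y
    simp only [hs_def, Set.mem_pi, Set.mem_univ, true_implies, Set.mem_preimage,
      MeasurableEquiv.finTwoArrow, Set.mem_prod, Set.mem_Icc, Fin.forall_fin_two]
    rfl
  have vp3 : MeasurePreserving (MeasurableEquiv.finTwoArrow : (Fin 2 → ℝ) ≃ᵐ ℝ × ℝ)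
      volume volume := volume_preserving_finTwoArrow ℝ
  set G : ℝ × ℝ → ℝ := fun p => min (p.1 + p.2) 1 - max (p.1 + p.2 - 1) 0 with hG_def
  have hGcont : Continuous G := by
    apply Continuous.sub
    · exact ((continuous_fst.add continuous_snd)).min continuous_const
    · exact ((continuous_fst.add continuous_snd).sub continuous_const).max continuous_const
  have hGcomp : ∀ y : Fin 2 → ℝ, g y - f y = G (MeasurableEquiv.finTwoArrow y) := by
    intro y
    simp [hG_def, hf_def, hg_def, MeasurableEquiv.finTwoArrow]
  calc ∫ y in s, (g y - f y) ∂volume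
      = ∫ y in MeasurableEquiv.finTwoArrow ⁻¹' (Icc (0:ℝ) 1 ×ˢ Icc (0:ℝ) 1),
          G (MeasurableEquiv.finTwoArrow y) ∂volume := by
        rw [← hpre2]; exact setIntegral_congr_fun hs fun y _ => hGcomp y
    _ = ∫ p in (Icc (0:ℝ) 1 ×ˢ Icc (0:ℝ) 1), G p ∂volume :=
        vp3.setIntegral_preimage_emb (MeasurableEquiv.measurableEmbedding _) _ _
    _ = ∫ x in Icc (0:ℝ) 1, ∫ z in Icc (0:ℝ) 1, G (x, z) := by
        rw [Measure.volume_eq_prod, setIntegral_prod]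
        exact (hGcont.continuousOn).integrableOn_compact (isCompact_Icc.prod isCompact_Icc)
    _ = ∫ x in Icc (0:ℝ) 1, (x + 1/2 - x^2) := by
        apply setIntegral_congr_fun measurableSet_Icc
        intro x hx
        simp only [Set.mem_Icc] at hx
        dsimp only
        have : ∫ z in Icc (0:ℝ) 1, G (x, z) = ∫ z in (0:ℝ)..1, G (x, z) := by
          rw [intervalIntegral.integral_of_le (by norm_num : (0:ℝ) ≤ 1),
            integral_Icc_eq_integral_Ioc]
        rw [this]
        exact aux_inner x hx.1 hx.2
    _ = 2/3 := by
        rw [integral_Icc_eq_integral_Ioc,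
          ← intervalIntegral.integral_of_le (by norm_num : (0:ℝ) ≤ 1)]
        exact aux_outer
end

section
/- The volume of the region {(x₁,…,x₅) ∈ [0,1]⁵ : 0 ≤ x₁ + x₂ + x₃ − x₄ − x₅ ≤ 1} equals 11/20. -/
open MeasureTheory Set

noncomputable def g4 (s : ℝ) : ℝ := max 0 (min 1 s - max 0 (s - 1))
noncomputable def g3 (t : ℝ) : ℝ :=
  if t ≤ 1 then t^2/2 else if t ≤ 2 then -t^2 + 3*t - 3/2 else (t-3)^2/2
noncomputable def g2 (u : ℝ) : ℝ :=
  if u ≤ 1 then -u^3/2 + u^2/2 + u/2 + 1/6 else u^3/2 - 5*u^2/2 + 7*u/2 - 5/6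
noncomputable def g1 (v : ℝ) : ℝ := v^4/4 - v^3/2 - v^2/4 + v/2 + 11/24

lemma g4_nonneg (s : ℝ) : 0 ≤ g4 s := le_max_left _ _

lemma g4_of_le_zero {s : ℝ} (h : s ≤ 0) : g4 s = 0 := by
  simp only [g4, min_def, max_def]; split_ifs <;> linarith

lemma g4_of_mem₁ {s : ℝ} (h0 : 0 ≤ s) (h1 : s ≤ 1) : g4 s = s := by
  simp only [g4, min_def, max_def]; split_ifs <;> linarith

lemma g4_of_mem₂ {s : ℝ} (h1 : 1 ≤ s) (h2 : s ≤ 2) : g4 s = 2 - s := by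
  simp only [g4, min_def, max_def]; split_ifs <;> linarith

lemma g4_of_ge_two {s : ℝ} (h : 2 ≤ s) : g4 s = 0 := by
  simp only [g4, min_def, max_def]; split_ifs <;> linarith

lemma g4_cont : Continuous g4 :=
  continuous_const.max ((continuous_const.min continuous_id).sub
    (continuous_const.max (continuous_id.sub continuous_const)))

lemma g3_cont : Continuous g3 := by
  unfold g3
  apply Continuous.if_le
  · continuity
  · apply Continuous.if_le
    · continuity
    · continuity
    · continuity
    · continuity
    · intro x hx; subst hx; norm_num
  · continuity
  · continuity
  · intro x hx
    subst hx
    norm_num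

lemma g2_cont : Continuous g2 := by
  unfold g2
  apply Continuous.if_le
  · continuity
  · continuity
  · continuity
  · continuity
  · intro x hx; subst hx; norm_num

lemma poly_int (a b c0 c1 c2 c3 c4 : ℝ) :
    ∫ s in a..b, (c0 + c1*s + c2*s^2 + c3*s^3 + c4*s^4) =
      (c0*b + c1*b^2/2 + c2*b^3/3 + c3*b^4/4 + c4*b^5/5)
        - (c0*a + c1*a^2/2 + c2*a^3/3 + c3*a^4/4 + c4*a^5/5) := by
  have h : ∀ x : ℝ, HasDerivAt
      (fun x : ℝ => c0*x + c1*x^2/2 + c2*x^3/3 + c3*x^4/4 + c4*x^5/5)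
      (c0 + c1*x + c2*x^2 + c3*x^3 + c4*x^4) x := by
    intro x
    have h := (((((hasDerivAt_pow 1 x).const_mul c0).add
      ((hasDerivAt_pow 2 x).const_mul (c1/2))).add
      ((hasDerivAt_pow 3 x).const_mul (c2/3))).add
      ((hasDerivAt_pow 4 x).const_mul (c3/4))).add
      ((hasDerivAt_pow 5 x).const_mul (c4/5))
    have hf : (fun x : ℝ => c0*x + c1*x^2/2 + c2*x^3/3 + c3*x^4/4 + c4*x^5/5)
        = (fun x : ℝ => c0 * x^1 + c1/2 * x^2 + c2/3 * x^3 + c3/4 * x^4 + c4/5 * x^5) := by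
      funext x; ring
    rw [hf]
    refine h.congr_deriv ?_
    norm_num only
    ring
  rw [intervalIntegral.integral_eq_sub_of_hasDerivAt (fun x _ => h x)
    ((by continuity : Continuous fun s : ℝ => c0 + c1*s + c2*s^2 + c3*s^3 + c4*s^4).intervalIntegrable a b)]

lemma I3 {t : ℝ} (h0 : 0 ≤ t) (h3 : t ≤ 3) :
    ∫ u in (0:ℝ)..1, g4 (t - u) = g3 t := by
  rw [intervalIntegral.integral_comp_sub_left g4 t, sub_zero]
  rcases le_or_gt t 1 with h1 | h1
  · rw [← intervalIntegral.integral_add_adjacent_intervals (a := t-1) (b := 0) (c := t)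
      (g4_cont.intervalIntegrable _ _) (g4_cont.intervalIntegrable _ _)]
    rw [intervalIntegral.integral_congr (a := t-1) (b := 0) (g := fun s => (0:ℝ) + 0*s + 0*s^2 + 0*s^3 + 0*s^4)
      (fun s hs => by
        rw [Set.uIcc_of_le (by linarith)] at hs
        rw [g4_of_le_zero hs.2]; ring)]
    rw [intervalIntegral.integral_congr (a := 0) (b := t) (g := fun s => (0:ℝ) + 1*s + 0*s^2 + 0*s^3 + 0*s^4)
      (fun s hs => by
        rw [Set.uIcc_of_le (by linarith)] at hs
        rw [g4_of_mem₁ hs.1 (le_trans hs.2 h1)]; ring)]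
    rw [poly_int, poly_int]
    unfold g3; rw [if_pos h1]; ring
  · rcases le_or_gt t 2 with h2 | h2
    · rw [← intervalIntegral.integral_add_adjacent_intervals (a := t-1) (b := 1) (c := t)
        (g4_cont.intervalIntegrable _ _) (g4_cont.intervalIntegrable _ _)]
      rw [intervalIntegral.integral_congr (a := t-1) (b := 1) (g := fun s => (0:ℝ) + 1*s + 0*s^2 + 0*s^3 + 0*s^4)
        (fun s hs => by
          rw [Set.uIcc_of_le (by linarith)] at hs
          rw [g4_of_mem₁ (by linarith [hs.1]) hs.2]; ring)]
      rw [intervalIntegral.integral_congr (a := 1) (b := t) (g := fun s => (2:ℝ) + (-1)*s + 0*s^2 + 0*s^3 + 0*s^4)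
        (fun s hs => by
          rw [Set.uIcc_of_le (by linarith)] at hs
          rw [g4_of_mem₂ hs.1 (by linarith [hs.2])]; ring)]
      rw [poly_int, poly_int]
      unfold g3; rw [if_neg (not_le.2 h1), if_pos h2]; ring
    · rw [← intervalIntegral.integral_add_adjacent_intervals (a := t-1) (b := 2) (c := t)
        (g4_cont.intervalIntegrable _ _) (g4_cont.intervalIntegrable _ _)]
      rw [intervalIntegral.integral_congr (a := t-1) (b := 2) (g := fun s => (2:ℝ) + (-1)*s + 0*s^2 + 0*s^3 + 0*s^4)
        (fun s hs => by
          rw [Set.uIcc_of_le (by linarith)] at hs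
          rw [g4_of_mem₂ (by linarith [hs.1]) hs.2]; ring)]
      rw [intervalIntegral.integral_congr (a := 2) (b := t) (g := fun s => (0:ℝ) + 0*s + 0*s^2 + 0*s^3 + 0*s^4)
        (fun s hs => by
          rw [Set.uIcc_of_le (by linarith)] at hs
          rw [g4_of_ge_two hs.1]; ring)]
      rw [poly_int, poly_int]
      unfold g3; rw [if_neg (not_le.2 h1), if_neg (not_le.2 h2)]; ring

lemma I2 {t : ℝ} (h0 : 0 ≤ t) (h2 : t ≤ 2) :
    ∫ u in (0:ℝ)..1, g3 (t + u) = g2 t := by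
  rw [intervalIntegral.integral_comp_add_left g3 t]
  rcases le_or_gt t 1 with h1 | h1
  · rw [← intervalIntegral.integral_add_adjacent_intervals (a := t+0) (b := 1) (c := t+1)
      (g3_cont.intervalIntegrable _ _) (g3_cont.intervalIntegrable _ _)]
    rw [intervalIntegral.integral_congr (a := t+0) (b := 1) (g := fun s => (0:ℝ) + 0*s + (1/2)*s^2 + 0*s^3 + 0*s^4)
      (fun s hs => by
        rw [Set.uIcc_of_le (by linarith)] at hs
        unfold g3; rw [if_pos hs.2]; ring)]
    rw [intervalIntegral.integral_congr (a := 1) (b := t+1)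
      (g := fun s => (-3/2:ℝ) + 3*s + (-1)*s^2 + 0*s^3 + 0*s^4)
      (fun s hs => by
        rw [Set.uIcc_of_le (by linarith)] at hs
        unfold g3
        rcases le_or_gt s 1 with hb | hb
        · have : s = 1 := le_antisymm hb hs.1
          subst this; norm_num
        · rw [if_neg (not_le.2 hb), if_pos (by linarith [hs.2])]; ring)]
    rw [poly_int, poly_int]
    unfold g2; rw [if_pos h1]; ring
  · rw [← intervalIntegral.integral_add_adjacent_intervals (a := t+0) (b := 2) (c := t+1)
      (g3_cont.intervalIntegrable _ _) (g3_cont.intervalIntegrable _ _)]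
    rw [intervalIntegral.integral_congr (a := t+0) (b := 2)
      (g := fun s => (-3/2:ℝ) + 3*s + (-1)*s^2 + 0*s^3 + 0*s^4)
      (fun s hs => by
        rw [Set.uIcc_of_le (by linarith)] at hs
        unfold g3
        rw [if_neg (not_le.2 (by linarith [hs.1])), if_pos hs.2]; ring)]
    rw [intervalIntegral.integral_congr (a := 2) (b := t+1)
      (g := fun s => (9/2:ℝ) + (-3)*s + (1/2)*s^2 + 0*s^3 + 0*s^4)
      (fun s hs => by
        rw [Set.uIcc_of_le (by linarith)] at hs
        unfold g3
        rcases le_or_gt s 2 with hb | hb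
        · have : s = 2 := le_antisymm hb hs.1
          subst this; norm_num
        · rw [if_neg (by linarith : ¬ s ≤ 1), if_neg (not_le.2 hb)]; ring)]
    rw [poly_int, poly_int]
    unfold g2; rw [if_neg (not_le.2 h1)]; ring

lemma I1 {t : ℝ} (h0 : 0 ≤ t) (h1 : t ≤ 1) :
    ∫ u in (0:ℝ)..1, g2 (t + u) = g1 t := by
  rw [intervalIntegral.integral_comp_add_left g2 t]
  rw [← intervalIntegral.integral_add_adjacent_intervals (a := t+0) (b := 1) (c := t+1)
    (g2_cont.intervalIntegrable _ _) (g2_cont.intervalIntegrable _ _)]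
  rw [intervalIntegral.integral_congr (a := t+0) (b := 1)
    (g := fun s => (1/6:ℝ) + (1/2)*s + (1/2)*s^2 + (-1/2)*s^3 + 0*s^4)
    (fun s hs => by
      rw [Set.uIcc_of_le (by linarith)] at hs
      unfold g2; rw [if_pos hs.2]; ring)]
  rw [intervalIntegral.integral_congr (a := 1) (b := t+1)
    (g := fun s => (-5/6:ℝ) + (7/2)*s + (-5/2)*s^2 + (1/2)*s^3 + 0*s^4)
    (fun s hs => by
      rw [Set.uIcc_of_le (by linarith)] at hs
      unfold g2
      rcases le_or_gt s 1 with hb | hb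
      · have : s = 1 := le_antisymm hb hs.1
        subst this; norm_num
      · rw [if_neg (not_le.2 hb)]; ring)]
  rw [poly_int, poly_int]
  unfold g1; ring

lemma I0 : ∫ u in (0:ℝ)..1, g1 u = 11/20 := by
  rw [intervalIntegral.integral_congr
    (g := fun s => (11/24:ℝ) + (1/2)*s + (-1/4)*s^2 + (-1/2)*s^3 + (1/4)*s^4)
    (fun s _ => by unfold g1; ring)]
  rw [poly_int]; norm_num

lemma g3_nonneg (t : ℝ) : 0 ≤ g3 t := by
  unfold g3
  split_ifs with h1 h2
  · positivity
  · nlinarith [mul_nonneg (sub_nonneg.2 (not_le.1 h1).le) (sub_nonneg.2 h2)]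
  · positivity

lemma g2_nonneg {u : ℝ} (h0 : 0 ≤ u) (h2 : u ≤ 2) : 0 ≤ g2 u := by
  unfold g2
  split_ifs with h1
  · nlinarith [mul_nonneg (mul_nonneg h0 h0) (sub_nonneg.2 h1)]
  · have h1' : 1 ≤ u := (not_le.1 h1).le
    nlinarith [mul_nonneg (mul_nonneg (sub_nonneg.2 h2) (sub_nonneg.2 h2)) (sub_nonneg.2 h1'),
      sub_nonneg.2 h2]

lemma g1_nonneg {v : ℝ} (h0 : 0 ≤ v) (h1 : v ≤ 1) : 0 ≤ g1 v := by
  unfold g1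
  nlinarith [mul_nonneg (mul_nonneg h0 (sub_nonneg.2 h1)) (by linarith : (0:ℝ) ≤ 1 + v),
    pow_nonneg h0 4, sq_nonneg v]

lemma g1_cont : Continuous g1 := by unfold g1; continuity

lemma LB {f : ℝ → ℝ} (hc : Continuous f) (hnn : ∀ u ∈ Icc (0:ℝ) 1, 0 ≤ f u) :
    ∫⁻ u in Icc (0:ℝ) 1, ENNReal.ofReal (f u) = ENNReal.ofReal (∫ u in (0:ℝ)..1, f u) := by
  rw [← ofReal_integral_eq_lintegral_ofReal hc.integrableOn_Icc
    ((ae_restrict_iff' measurableSet_Icc).2 (ae_of_all _ hnn))]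
  congr 1
  rw [intervalIntegral.integral_of_le zero_le_one, integral_Icc_eq_integral_Ioc]

@[simp] lemma cons5_1 (a : ℝ) (y : Fin 4 → ℝ) : (Fin.cons a y : Fin 5 → ℝ) 1 = y 0 := rfl
@[simp] lemma cons5_2 (a : ℝ) (y : Fin 4 → ℝ) : (Fin.cons a y : Fin 5 → ℝ) 2 = y 1 := rfl
@[simp] lemma cons5_3 (a : ℝ) (y : Fin 4 → ℝ) : (Fin.cons a y : Fin 5 → ℝ) 3 = y 2 := rfl
@[simp] lemma cons5_4 (a : ℝ) (y : Fin 4 → ℝ) : (Fin.cons a y : Fin 5 → ℝ) 4 = y 3 := rfl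
@[simp] lemma cons4_1 (a : ℝ) (y : Fin 3 → ℝ) : (Fin.cons a y : Fin 4 → ℝ) 1 = y 0 := rfl
@[simp] lemma cons4_2 (a : ℝ) (y : Fin 3 → ℝ) : (Fin.cons a y : Fin 4 → ℝ) 2 = y 1 := rfl
@[simp] lemma cons4_3 (a : ℝ) (y : Fin 3 → ℝ) : (Fin.cons a y : Fin 4 → ℝ) 3 = y 2 := rfl
@[simp] lemma cons3_1 (a : ℝ) (y : Fin 2 → ℝ) : (Fin.cons a y : Fin 3 → ℝ) 1 = y 0 := rfl
@[simp] lemma cons3_2 (a : ℝ) (y : Fin 2 → ℝ) : (Fin.cons a y : Fin 3 → ℝ) 2 = y 1 := rfl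
@[simp] lemma cons2_1 (a : ℝ) (y : Fin 1 → ℝ) : (Fin.cons a y : Fin 2 → ℝ) 1 = y 0 := rfl

lemma peel {n : ℕ} (A : Set (Fin (n+1) → ℝ)) (hA : MeasurableSet A) :
    volume A = ∫⁻ a : ℝ, volume {y : Fin n → ℝ | Fin.cons a y ∈ A} := by
  have h := (volume_preserving_piFinSuccAbove (fun _ : Fin (n+1) => ℝ) 0).symm
  rw [← h.measure_preimage_equiv A]
  rw [Measure.volume_eq_prod,
    Measure.prod_apply ((MeasurableEquiv.piFinSuccAbove (fun _ : Fin (n+1) => ℝ) 0).symm.measurable hA)]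
  refine lintegral_congr fun a => ?_
  congr 1
  ext y
  simp [MeasurableEquiv.piFinSuccAbove, Fin.insertNth_zero', Fin.consEquiv]

lemma measAux {k : ℕ} (L : (Fin k → ℝ) → ℝ) (hL : Measurable L) :
    MeasurableSet {y : Fin k → ℝ | (∀ i, 0 ≤ y i ∧ y i ≤ 1) ∧ 0 ≤ L y ∧ L y ≤ 1} := by
  have h1 : MeasurableSet {y : Fin k → ℝ | ∀ i, 0 ≤ y i ∧ y i ≤ 1} := by
    have : {y : Fin k → ℝ | ∀ i, 0 ≤ y i ∧ y i ≤ 1} = ⋂ i, (fun y => y i) ⁻¹' (Icc 0 1) := by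
      ext y; simp [Set.mem_Icc]
    rw [this]
    exact MeasurableSet.iInter fun i => (measurable_pi_apply i) measurableSet_Icc
  have h2 : MeasurableSet {y : Fin k → ℝ | 0 ≤ L y ∧ L y ≤ 1} := by
    have : {y : Fin k → ℝ | 0 ≤ L y ∧ L y ≤ 1} = L ⁻¹' (Icc 0 1) := by
      ext y; simp [Set.mem_Icc]
    rw [this]
    exact hL measurableSet_Icc
  have : {y : Fin k → ℝ | (∀ i, 0 ≤ y i ∧ y i ≤ 1) ∧ 0 ≤ L y ∧ L y ≤ 1}
      = {y : Fin k → ℝ | ∀ i, 0 ≤ y i ∧ y i ≤ 1} ∩ {y : Fin k → ℝ | 0 ≤ L y ∧ L y ≤ 1} := rfl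
  rw [this]
  exact h1.inter h2

lemma set1_eq (c : ℝ) : {u : ℝ | (0 ≤ u ∧ u ≤ 1) ∧ 0 ≤ c - u ∧ c - u ≤ 1}
    = Icc (max 0 (c-1)) (min 1 c) := by
  ext u
  simp only [Set.mem_setOf_eq, Set.mem_Icc, max_le_iff, le_min_iff]
  constructor
  · rintro ⟨⟨h1, h2⟩, h3, h4⟩
    exact ⟨⟨by linarith, by linarith⟩, by linarith, by linarith⟩
  · rintro ⟨⟨h1, h2⟩, h3, h4⟩
    exact ⟨⟨by linarith, by linarith⟩, by linarith, by linarith⟩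

lemma vol1 (c : ℝ) : volume {u : ℝ | (0 ≤ u ∧ u ≤ 1) ∧ 0 ≤ c - u ∧ c - u ≤ 1}
    = ENNReal.ofReal (g4 c) := by
  rw [set1_eq, Real.volume_Icc]
  unfold g4
  rcases le_or_gt 0 (min 1 c - max 0 (c-1)) with h | h
  · rw [max_eq_right h]
  · rw [max_eq_left h.le, ENNReal.ofReal_of_nonpos h.le, ENNReal.ofReal_zero]

lemma vol2 {c : ℝ} (h0 : 0 ≤ c) (h3 : c ≤ 3) :
    volume {y : Fin 2 → ℝ | (∀ i, 0 ≤ y i ∧ y i ≤ 1) ∧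
      0 ≤ c - y 0 - y 1 ∧ c - y 0 - y 1 ≤ 1} = ENNReal.ofReal (g3 c) := by
  rw [peel _ (measAux (fun y => c - y 0 - y 1) (by fun_prop))]
  have point : ∀ a : ℝ, volume {y : Fin 1 → ℝ | Fin.cons a y ∈
        {y : Fin 2 → ℝ | (∀ i, 0 ≤ y i ∧ y i ≤ 1) ∧ 0 ≤ c - y 0 - y 1 ∧ c - y 0 - y 1 ≤ 1}}
      = Set.indicator (Icc (0:ℝ) 1) (fun a => ENNReal.ofReal (g4 (c - a))) a := by
    intro a
    by_cases ha : a ∈ Icc (0:ℝ) 1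
    · rw [Set.indicator_of_mem ha]
      obtain ⟨ha1, ha2⟩ := ha
      have hset : {y : Fin 1 → ℝ | Fin.cons a y ∈
            {y : Fin 2 → ℝ | (∀ i, 0 ≤ y i ∧ y i ≤ 1) ∧ 0 ≤ c - y 0 - y 1 ∧ c - y 0 - y 1 ≤ 1}}
          = (MeasurableEquiv.funUnique (Fin 1) ℝ) ⁻¹'
            {u : ℝ | (0 ≤ u ∧ u ≤ 1) ∧ 0 ≤ c - a - u ∧ c - a - u ≤ 1} := by
        ext y
        simp only [Set.mem_setOf_eq, Set.mem_preimage, Fin.forall_fin_succ, Fin.cons_zero,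
          Fin.cons_succ, cons2_1, Fin.forall_fin_one, MeasurableEquiv.funUnique_apply,
          Fin.default_eq_zero, IsEmpty.forall_iff, and_true, true_and]
        tauto
      rw [hset]
      exact ((volume_preserving_funUnique (Fin 1) ℝ).measure_preimage_equiv _).trans
        (vol1 (c - a))
    · rw [Set.indicator_of_notMem ha]
      convert measure_empty (μ := (volume : Measure (Fin 1 → ℝ)))
      ext y
      simp only [Set.mem_setOf_eq, Set.mem_empty_iff_false, iff_false]
      rintro ⟨hall, -⟩
      exact ha ⟨(hall 0).1, (hall 0).2⟩
  rw [lintegral_congr point, lintegral_indicator measurableSet_Icc,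
    LB (f := fun u => g4 (c - u)) (g4_cont.comp (continuous_const.sub continuous_id))
      (fun u _ => g4_nonneg _), I3 h0 h3]

lemma vol3 {c : ℝ} (h0 : 0 ≤ c) (h2 : c ≤ 2) :
    volume {y : Fin 3 → ℝ | (∀ i, 0 ≤ y i ∧ y i ≤ 1) ∧
      0 ≤ c + y 0 - y 1 - y 2 ∧ c + y 0 - y 1 - y 2 ≤ 1} = ENNReal.ofReal (g2 c) := by
  rw [peel _ (measAux (fun y => c + y 0 - y 1 - y 2) (by fun_prop))]
  have point : ∀ a : ℝ, volume {y : Fin 2 → ℝ | Fin.cons a y ∈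
        {y : Fin 3 → ℝ | (∀ i, 0 ≤ y i ∧ y i ≤ 1) ∧
          0 ≤ c + y 0 - y 1 - y 2 ∧ c + y 0 - y 1 - y 2 ≤ 1}}
      = Set.indicator (Icc (0:ℝ) 1) (fun a => ENNReal.ofReal (g3 (c + a))) a := by
    intro a
    by_cases ha : a ∈ Icc (0:ℝ) 1
    · rw [Set.indicator_of_mem ha]
      obtain ⟨ha1, ha2⟩ := ha
      have hset : {y : Fin 2 → ℝ | Fin.cons a y ∈
            {y : Fin 3 → ℝ | (∀ i, 0 ≤ y i ∧ y i ≤ 1) ∧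
              0 ≤ c + y 0 - y 1 - y 2 ∧ c + y 0 - y 1 - y 2 ≤ 1}}
          = {y : Fin 2 → ℝ | (∀ i, 0 ≤ y i ∧ y i ≤ 1) ∧
              0 ≤ c + a - y 0 - y 1 ∧ c + a - y 0 - y 1 ≤ 1} := by
        ext y
        simp only [Set.mem_setOf_eq, Fin.forall_fin_succ, Fin.cons_zero, Fin.cons_succ,
          cons3_1, cons3_2, Fin.default_eq_zero, IsEmpty.forall_iff, and_true, true_and,
          Fin.forall_fin_one]
        tauto
      rw [hset, vol2 (c := c + a) (by linarith) (by linarith)]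
    · rw [Set.indicator_of_notMem ha]
      convert measure_empty (μ := (volume : Measure (Fin 2 → ℝ)))
      ext y
      simp only [Set.mem_setOf_eq, Set.mem_empty_iff_false, iff_false]
      rintro ⟨hall, -⟩
      exact ha ⟨(hall 0).1, (hall 0).2⟩
  rw [lintegral_congr point, lintegral_indicator measurableSet_Icc,
    LB (f := fun u => g3 (c + u)) (g3_cont.comp (continuous_const.add continuous_id))
      (fun u _ => g3_nonneg _), I2 h0 h2]

lemma vol4 {c : ℝ} (h0 : 0 ≤ c) (h1 : c ≤ 1) :
    volume {y : Fin 4 → ℝ | (∀ i, 0 ≤ y i ∧ y i ≤ 1) ∧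
      0 ≤ c + y 0 + y 1 - y 2 - y 3 ∧ c + y 0 + y 1 - y 2 - y 3 ≤ 1} = ENNReal.ofReal (g1 c) := by
  rw [peel _ (measAux (fun y => c + y 0 + y 1 - y 2 - y 3) (by fun_prop))]
  have point : ∀ a : ℝ, volume {y : Fin 3 → ℝ | Fin.cons a y ∈
        {y : Fin 4 → ℝ | (∀ i, 0 ≤ y i ∧ y i ≤ 1) ∧
          0 ≤ c + y 0 + y 1 - y 2 - y 3 ∧ c + y 0 + y 1 - y 2 - y 3 ≤ 1}}
      = Set.indicator (Icc (0:ℝ) 1) (fun a => ENNReal.ofReal (g2 (c + a))) a := by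
    intro a
    by_cases ha : a ∈ Icc (0:ℝ) 1
    · rw [Set.indicator_of_mem ha]
      obtain ⟨ha1, ha2⟩ := ha
      have hset : {y : Fin 3 → ℝ | Fin.cons a y ∈
            {y : Fin 4 → ℝ | (∀ i, 0 ≤ y i ∧ y i ≤ 1) ∧
              0 ≤ c + y 0 + y 1 - y 2 - y 3 ∧ c + y 0 + y 1 - y 2 - y 3 ≤ 1}}
          = {y : Fin 3 → ℝ | (∀ i, 0 ≤ y i ∧ y i ≤ 1) ∧
              0 ≤ c + a + y 0 - y 1 - y 2 ∧ c + a + y 0 - y 1 - y 2 ≤ 1} := by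
        ext y
        simp only [Set.mem_setOf_eq, Fin.forall_fin_succ, Fin.cons_zero, Fin.cons_succ,
          cons4_1, cons4_2, cons4_3, Fin.default_eq_zero, IsEmpty.forall_iff, and_true,
          true_and, Fin.forall_fin_one]
        tauto
      rw [hset, vol3 (c := c + a) (by linarith) (by linarith)]
    · rw [Set.indicator_of_notMem ha]
      convert measure_empty (μ := (volume : Measure (Fin 3 → ℝ)))
      ext y
      simp only [Set.mem_setOf_eq, Set.mem_empty_iff_false, iff_false]
      rintro ⟨hall, -⟩
      exact ha ⟨(hall 0).1, (hall 0).2⟩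
  rw [lintegral_congr point, lintegral_indicator measurableSet_Icc,
    LB (f := fun u => g2 (c + u)) (g2_cont.comp (continuous_const.add continuous_id))
      (fun u hu => g2_nonneg (by linarith [hu.1]) (by linarith [hu.2])), I1 h0 h1]

theorem stmt11 :
    volume {x : Fin 5 → ℝ | (∀ i, x i ∈ Set.Icc (0 : ℝ) 1) ∧
        0 ≤ x 0 + x 1 + x 2 - x 3 - x 4 ∧ x 0 + x 1 + x 2 - x 3 - x 4 ≤ 1}
      = ENNReal.ofReal (11 / 20) := by
  have hSeq : {x : Fin 5 → ℝ | (∀ i, x i ∈ Set.Icc (0 : ℝ) 1) ∧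
        0 ≤ x 0 + x 1 + x 2 - x 3 - x 4 ∧ x 0 + x 1 + x 2 - x 3 - x 4 ≤ 1}
      = {x : Fin 5 → ℝ | (∀ i, 0 ≤ x i ∧ x i ≤ 1) ∧
        0 ≤ x 0 + x 1 + x 2 - x 3 - x 4 ∧ x 0 + x 1 + x 2 - x 3 - x 4 ≤ 1} := by
    ext x; simp [Set.mem_Icc]
  rw [hSeq, peel _ (measAux (fun x => x 0 + x 1 + x 2 - x 3 - x 4) (by fun_prop))]
  have point : ∀ a : ℝ, volume {y : Fin 4 → ℝ | Fin.cons a y ∈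
        {x : Fin 5 → ℝ | (∀ i, 0 ≤ x i ∧ x i ≤ 1) ∧
          0 ≤ x 0 + x 1 + x 2 - x 3 - x 4 ∧ x 0 + x 1 + x 2 - x 3 - x 4 ≤ 1}}
      = Set.indicator (Icc (0:ℝ) 1) (fun a => ENNReal.ofReal (g1 a)) a := by
    intro a
    by_cases ha : a ∈ Icc (0:ℝ) 1
    · rw [Set.indicator_of_mem ha]
      obtain ⟨ha1, ha2⟩ := ha
      have hset : {y : Fin 4 → ℝ | Fin.cons a y ∈
            {x : Fin 5 → ℝ | (∀ i, 0 ≤ x i ∧ x i ≤ 1) ∧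
              0 ≤ x 0 + x 1 + x 2 - x 3 - x 4 ∧ x 0 + x 1 + x 2 - x 3 - x 4 ≤ 1}}
          = {y : Fin 4 → ℝ | (∀ i, 0 ≤ y i ∧ y i ≤ 1) ∧
              0 ≤ a + y 0 + y 1 - y 2 - y 3 ∧ a + y 0 + y 1 - y 2 - y 3 ≤ 1} := by
        ext y
        simp only [Set.mem_setOf_eq, Fin.forall_fin_succ, Fin.cons_zero, Fin.cons_succ,
          cons5_1, cons5_2, cons5_3, cons5_4, Fin.default_eq_zero, IsEmpty.forall_iff,
          and_true, true_and, Fin.forall_fin_one]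
        tauto
      rw [hset, vol4 ha1 ha2]
    · rw [Set.indicator_of_notMem ha]
      convert measure_empty (μ := (volume : Measure (Fin 4 → ℝ)))
      ext y
      simp only [Set.mem_setOf_eq, Set.mem_empty_iff_false, iff_false]
      rintro ⟨hall, -⟩
      exact ha ⟨(hall 0).1, (hall 0).2⟩
  rw [lintegral_congr point, lintegral_indicator measurableSet_Icc,
    LB g1_cont (fun u hu => g1_nonneg hu.1 hu.2), I0]
end
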